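/- The limit as t → 0⁺ of ρ'(t)²/τ''(t) equals 1/2, where τ(t) = -log(t + e^{-t} - 1) and ρ(t) = τ(t) + log(1 - e^{-t}). -/

import Mathlib

open Real Filter Set

private lemma hder_exp_neg (t : ℝ) :
    HasDerivAt (fun s : ℝ => Real.exp (-s)) (-Real.exp (-t)) t := by
  have h := (Real.hasDerivAt_exp (-t)).comp t (hasDerivAt_neg t)
  rw [mul_neg_one] at h
  exact h

private lemma hder_f (t : ℝ) :
    HasDerivAt (fun s : ℝ => s + Real.exp (-s) - 1) (1 - Real.exp (-t)) t := by
  simpa [sub_eq_add_neg] using ((hasDerivAt_id t).add (hder_exp_neg t)).sub_const 1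

private lemma hder_g (t : ℝ) :
    HasDerivAt (fun s : ℝ => 1 - Real.exp (-s)) (Real.exp (-t)) t := by
  simpa using (hder_exp_neg t).const_sub (1:ℝ)

private lemma f_pos {t : ℝ} (ht : 0 < t) : 0 < t + Real.exp (-t) - 1 := by
  have h := Real.add_one_lt_exp (x := -t) (by linarith)
  linarith

private lemma g_pos {t : ℝ} (ht : 0 < t) : 0 < 1 - Real.exp (-t) := by
  have h : Real.exp (-t) < 1 := Real.exp_lt_one_iff.2 (by linarith)
  linarith

private lemma k_pos {t : ℝ} (ht : 0 < t) : 0 < 1 - (1 + t) * Real.exp (-t) := by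
  have h := Real.add_one_lt_exp (x := t) (by linarith)
  have he : 0 < Real.exp (-t) := Real.exp_pos _
  have : (1 + t) * Real.exp (-t) < Real.exp t * Real.exp (-t) := by
    apply mul_lt_mul_of_pos_right _ he
    linarith
  rw [← Real.exp_add] at this
  simpa using this

/-- `t / (1 - e^{-t}) → 1` as `t → 0`. -/
private lemma slope_lim :
    Tendsto (fun t : ℝ => t / (1 - Real.exp (-t))) (nhdsWithin 0 (Set.Ioi 0)) (nhds 1) := by
  have h : HasDerivAt (fun s : ℝ => 1 - Real.exp (-s)) 1 0 := by
    simpa using hder_g 0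
  have hs := hasDerivAt_iff_tendsto_slope.1 h
  have hs' : Tendsto (fun t : ℝ => (1 - Real.exp (-t)) / t) (nhdsWithin 0 {(0:ℝ)}ᶜ) (nhds 1) := by
    refine hs.congr fun t => ?_
    simp [slope_def_field, div_eq_inv_mul]
  have hinv := hs'.inv₀ one_ne_zero
  have : Tendsto (fun t : ℝ => t / (1 - Real.exp (-t))) (nhdsWithin 0 {(0:ℝ)}ᶜ) (nhds 1) := by
    simpa [inv_div] using hinv
  exact this.mono_left (nhdsWithin_mono _ fun x hx => ne_of_gt hx)

/-- key limit: `(1 - (1+t)e^{-t}) / (1 - e^{-t})² → 1/2` as `t → 0⁺`. -/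
private lemma key_lim :
    Tendsto (fun t : ℝ => (1 - (1 + t) * Real.exp (-t)) / (1 - Real.exp (-t)) ^ 2)
      (nhdsWithin 0 (Set.Ioi 0)) (nhds (1 / 2)) := by
  apply HasDerivAt.lhopital_zero_nhdsGT
    (f' := fun t => t * Real.exp (-t))
    (g' := fun t => 2 * (1 - Real.exp (-t)) * Real.exp (-t))
  · filter_upwards with t
    have h1 : HasDerivAt (fun s : ℝ => (1 + s) * Real.exp (-s))
        (1 * Real.exp (-t) + (1 + t) * -Real.exp (-t)) t := by
      exact ((hasDerivAt_id' t).const_add (1:ℝ)).mul (hder_exp_neg t)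
    have h2 := (hasDerivAt_const t (1:ℝ)).sub h1
    refine h2.congr_deriv ?_
    ring
  · filter_upwards with t
    have := ((hder_g t).pow 2)
    refine this.congr_deriv ?_
    ring
  · filter_upwards [self_mem_nhdsWithin] with t ht
    have h1 := g_pos ht
    have h2 := Real.exp_pos (-t)
    positivity
  · have hc : Continuous (fun t : ℝ => 1 - (1 + t) * Real.exp (-t)) := by continuity
    have := hc.tendsto 0
    simp only [Real.exp_zero, neg_zero, mul_one, add_zero, sub_self] at this
    exact this.mono_left nhdsWithin_le_nhds
  · have hc : Continuous (fun t : ℝ => (1 - Real.exp (-t)) ^ 2) := by continuity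
    have := hc.tendsto 0
    simp only [Real.exp_zero, neg_zero, sub_self, ne_eq, OfNat.ofNat_ne_zero,
      not_false_eq_true, zero_pow] at this
    exact this.mono_left nhdsWithin_le_nhds
  · have heq : ∀ t ∈ Set.Ioi (0:ℝ),
        t * Real.exp (-t) / (2 * (1 - Real.exp (-t)) * Real.exp (-t))
          = (1 / 2) * (t / (1 - Real.exp (-t))) := by
      intro t ht
      have h1 := (g_pos ht).ne'
      have h2 := (Real.exp_pos (-t)).ne'
      field_simp
    have := (tendsto_const_nhds (x := (1:ℝ)/2)).mul slope_lim
    rw [mul_one] at this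
    refine Tendsto.congr' ?_ this
    filter_upwards [self_mem_nhdsWithin] with t ht
    exact (heq t ht).symm

/-- The limit as t → 0⁺ of ρ'(t)²/τ''(t) equals 1/2, where
τ(t) = -log(t + e^{-t} - 1) and ρ(t) = τ(t) + log(1 - e^{-t}). -/
theorem tau_rho_quotient_tendsto_half
    (τ ρ : ℝ → ℝ)
    (hτ : ∀ t, τ t = -Real.log (t + Real.exp (-t) - 1))
    (hρ : ∀ t, ρ t = τ t + Real.log (1 - Real.exp (-t))) :
    Filter.Tendsto (fun t => (deriv ρ t) ^ 2 / (deriv (deriv τ) t))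
      (nhdsWithin 0 (Set.Ioi 0)) (nhds (1 / 2)) := by
  have hτfun : τ = fun s => -Real.log (s + Real.exp (-s) - 1) := funext hτ
  have hρfun : ρ = fun s => -Real.log (s + Real.exp (-s) - 1)
      + Real.log (1 - Real.exp (-s)) := by
    funext s; rw [hρ s, hτ s]
  -- derivative of τ on Ioi 0
  have hτ' : ∀ t ∈ Set.Ioi (0:ℝ), HasDerivAt τ
      (-((1 - Real.exp (-t)) / (t + Real.exp (-t) - 1))) t := by
    intro t ht
    rw [hτfun]
    exact ((hder_f t).log (f_pos ht).ne').neg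
  have hτd : ∀ t ∈ Set.Ioi (0:ℝ), deriv τ t
      = -((1 - Real.exp (-t)) / (t + Real.exp (-t) - 1)) := fun t ht => (hτ' t ht).deriv
  -- second derivative of τ on Ioi 0
  have hτ2 : ∀ t ∈ Set.Ioi (0:ℝ), deriv (deriv τ) t
      = (1 - (1 + t) * Real.exp (-t)) / (t + Real.exp (-t) - 1) ^ 2 := by
    intro t ht
    have hev : deriv τ =ᶠ[nhds t]
        (fun s => -((1 - Real.exp (-s)) / (s + Real.exp (-s) - 1))) := by
      filter_upwards [isOpen_Ioi.mem_nhds ht] with s hs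
      exact hτd s hs
    rw [hev.deriv_eq]
    have hf := f_pos ht
    have hd : HasDerivAt (fun s => -((1 - Real.exp (-s)) / (s + Real.exp (-s) - 1)))
        (-((Real.exp (-t) * (t + Real.exp (-t) - 1)
            - (1 - Real.exp (-t)) * (1 - Real.exp (-t))) / (t + Real.exp (-t) - 1) ^ 2)) t :=
      (((hder_g t).div (hder_f t) hf.ne')).neg
    rw [hd.deriv]
    rw [neg_div']
    congr 1
    ring
  -- derivative of ρ on Ioi 0
  have hρd : ∀ t ∈ Set.Ioi (0:ℝ), deriv ρ t
      = -((1 - Real.exp (-t)) / (t + Real.exp (-t) - 1))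
        + Real.exp (-t) / (1 - Real.exp (-t)) := by
    intro t ht
    rw [hρfun]
    have h1 : HasDerivAt (fun s : ℝ => -Real.log (s + Real.exp (-s) - 1))
        (-((1 - Real.exp (-t)) / (t + Real.exp (-t) - 1))) t :=
      ((hder_f t).log (f_pos ht).ne').neg
    have h2 : HasDerivAt (fun s : ℝ => Real.log (1 - Real.exp (-s)))
        (Real.exp (-t) / (1 - Real.exp (-t))) t :=
      (hder_g t).log (g_pos ht).ne'
    exact (h1.add h2).deriv
  -- reduce to the key limit
  refine Tendsto.congr' ?_ key_lim
  filter_upwards [self_mem_nhdsWithin] with t ht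
  rw [hρd t ht, hτ2 t ht]
  have hf := (f_pos ht).ne'
  have hg := (g_pos ht).ne'
  have hk := (k_pos ht).ne'
  field_simp
  ring
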